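/- For every N ≥ 1 and every k ≥ 1, the identity Q_k(x|a)² + 2 Σ_{i=1}^{k} (−1)^i Q_{k+i}(x|a) Q_{k−i}(x|a) + Σ_{r=k}^{2k−1} Σ_{s=0}^{2k−1−r} f_{k,k}^{r,s}(a) Q_r(x|a) Q_s(x|a) = 0 holds in the polynomial ring ℤ[a_2,…,a_{2k}][x_1,…,x_N]. -/

import Mathlib

open Finset

noncomputable section

/-- The ambient polynomial ring `ℤ[x_1,…,x_N; a_2,a_3,…]`: the variable `Sum.inl i`
is `x_{i+1}`, and `Sum.inr j` is the parameter `a_{j+2}`. -/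
abbrev QRing (N : ℕ) := MvPolynomial (Fin N ⊕ ℕ) ℤ

/-- The variable `x_i` (0-indexed). -/
def xv (N : ℕ) (i : Fin N) : QRing N := MvPolynomial.X (Sum.inl i)

/-- The parameter `a_m` for `m ≥ 2`; `a_1 = 0`. -/
def av (N : ℕ) (m : ℕ) : QRing N :=
  if 2 ≤ m then MvPolynomial.X (Sum.inr (m - 2)) else 0

/-- The generating series `∏_{i=1}^N (1+x_i z)/(1−x_i z)`. -/
def genSeries (N : ℕ) : PowerSeries (QRing N) :=
  ∏ i : Fin N,
    (1 + PowerSeries.C (xv N i) * PowerSeries.X) *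
      PowerSeries.invOfUnit (1 - PowerSeries.C (xv N i) * PowerSeries.X) 1

/-- The Schur Q-polynomial `Q_m(x)`: the coefficient of `z^m` in
`∏_{i=1}^N (1+x_i z)/(1−x_i z)`. -/
def Qone (N m : ℕ) : QRing N := PowerSeries.coeff m (genSeries N)

/-- Elementary symmetric polynomial `e_j` in the parameters `a_m`, `m ∈ s`. -/
def esymA (N : ℕ) (s : Finset ℕ) (j : ℕ) : QRing N :=
  ∑ t ∈ s.powersetCard j, ∏ m ∈ t, av N m

/-- Complete homogeneous symmetric polynomial `h_m` in the parameters `a_i`, `i ∈ s`. -/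
def hsymA (N : ℕ) (s : Finset ℕ) (m : ℕ) : QRing N :=
  ∑ t ∈ s.sym m, ((t : Multiset ℕ).map (av N)).prod

/-- The one-row factorial Schur Q-polynomial
`Q_m(x|a) = Σ_{j=0}^{m−1} (−1)^j e_j(a_2,…,a_m) Q_{m−j}(x)` for `m ≥ 1`, `Q_0(x|a) = 1`. -/
def Qfact (N m : ℕ) : QRing N :=
  if m = 0 then 1 else
    ∑ j ∈ range m, (-1) ^ j * esymA N (Icc 2 m) j * Qone N (m - j)

/-- The coefficient `f_{k,ℓ}^{r,s}(a) = (−1)^{ℓ−s} Σ_{j=0}^{k+ℓ−r−s}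
2 h_{k+ℓ−r−s−j}(a_{k+1},…,a_{r+1}) e_j(a_{s+2},…,a_ℓ)`. -/
def fco (N k l r s : ℕ) : QRing N :=
  (-1) ^ (l - s) *
    ∑ j ∈ range (k + l - r - s + 1),
      2 * hsymA N (Icc (k + 1) (r + 1)) (k + l - r - s - j) * esymA N (Icc (s + 2) l) j

/-- The two-row factorial Schur Q-polynomial `Q_{k,ℓ}(x|a)` for `k ≥ ℓ ≥ 1`. -/
def Qfact2 (N k l : ℕ) : QRing N :=
  Qfact N k * Qfact N l +
    2 * ∑ i ∈ Icc 1 l, (-1) ^ i * Qfact N (k + i) * Qfact N (l - i) +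
    ∑ r ∈ Icc k (k + l - 1), ∑ s ∈ range (k + l - r),
      fco N k l r s * Qfact N r * Qfact N s

/-! ### basic symmetric polynomial lemmas -/

variable {N : ℕ}

@[simp] lemma esymA_zero (s : Finset ℕ) : esymA N s 0 = 1 := by
  simp [esymA]

lemma esymA_eq_zero {s : Finset ℕ} {j : ℕ} (h : s.card < j) : esymA N s j = 0 := by
  rw [esymA, Finset.powersetCard_eq_empty.2 h, Finset.sum_empty]

lemma esymA_insert {b : ℕ} {s : Finset ℕ} (hb : b ∉ s) (j : ℕ) :
    esymA N (insert b s) (j + 1) = esymA N s (j + 1) + av N b * esymA N s j := by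
  rw [esymA, Finset.powersetCard_succ_insert hb]
  rw [Finset.sum_union]
  · congr 1
    rw [Finset.sum_image, esymA, Finset.mul_sum]
    · refine Finset.sum_congr rfl fun t ht => ?_
      have hbt : b ∉ t := fun hc => hb ((Finset.mem_powersetCard.1 ht).1 hc)
      rw [Finset.prod_insert hbt]
    · intro t1 h1 t2 h2 he
      have hb1 : b ∉ t1 := fun hc => hb ((Finset.mem_powersetCard.1 h1).1 hc)
      have hb2 : b ∉ t2 := fun hc => hb ((Finset.mem_powersetCard.1 h2).1 hc)
      have := congrArg (fun u => Finset.erase u b) he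
      simpa [Finset.erase_insert hb1, Finset.erase_insert hb2] using this
  · rw [Finset.disjoint_left]
    intro t ht htimg
    obtain ⟨u, hu, rfl⟩ := Finset.mem_image.1 htimg
    exact hb ((Finset.mem_powersetCard.1 ht).1 (Finset.mem_insert_self b u))

@[simp] lemma hsymA_zero (s : Finset ℕ) : hsymA N s 0 = 1 := by
  rw [hsymA, Finset.sym_zero, Finset.sum_singleton]
  rfl

@[simp] lemma hsymA_empty (n : ℕ) : hsymA N (∅ : Finset ℕ) (n + 1) = 0 := by
  rw [hsymA, Finset.sym_empty, Finset.sum_empty]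

lemma hsymA_insert {b : ℕ} {s : Finset ℕ} (hb : b ∉ s) (n : ℕ) :
    hsymA N (insert b s) (n + 1) =
      hsymA N s (n + 1) + av N b * hsymA N (insert b s) n := by
  classical
  rw [hsymA, ← Finset.sum_filter_add_sum_filter_not ((insert b s).sym (n+1)) (fun t => b ∈ t),
    add_comm]
  congr 1
  · -- terms not containing b
    rw [hsymA]
    apply Finset.sum_congr _ (fun t _ => rfl)
    ext t
    simp only [Finset.mem_filter, Finset.mem_sym_iff, Finset.mem_insert]
    constructor
    · rintro ⟨h1, h2⟩ a ha
      rcases h1 a ha with rfl | h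
      · exact absurd ha h2
      · exact h
    · intro h
      exact ⟨fun a ha => Or.inr (h a ha), fun hc => hb (h b hc)⟩
  · -- terms containing b
    rw [hsymA, Finset.mul_sum]
    refine Finset.sum_bij' (fun t ht => Sym.erase t b (Finset.mem_filter.1 ht).2)
      (fun t ht => b ::ₛ t) ?_ ?_ ?_ ?_ ?_
    · intro t ht
      rw [Finset.mem_sym_iff]
      intro a ha
      have := (Finset.mem_filter.1 ht).1
      rw [Finset.mem_sym_iff] at this
      apply this a
      have : (a : ℕ) ∈ ((t.erase b (Finset.mem_filter.1 ht).2 : Sym ℕ n) : Multiset ℕ) := ha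
      rw [Sym.coe_erase] at this
      exact Multiset.mem_of_mem_erase this
    · intro t ht
      rw [Finset.mem_filter]
      constructor
      · rw [Finset.mem_sym_iff]
        intro a ha
        rcases Sym.mem_cons.1 ha with rfl | h
        · exact Finset.mem_insert_self _ _
        · exact (Finset.mem_sym_iff.1 ht) a h
      · exact Sym.mem_cons_self _ _
    · intro t ht
      exact Sym.cons_erase _
    · intro t ht
      exact Sym.erase_cons_head _ _
    · intro t ht
      have hbt : b ∈ t := (Finset.mem_filter.1 ht).2
      have hcoe : (t : Multiset ℕ) = b ::ₘ ((t : Multiset ℕ).erase b) :=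
        (Multiset.cons_erase hbt).symm
      simp only [Sym.coe_erase]
      conv_lhs => rw [hcoe]
      rw [Multiset.map_cons, Multiset.prod_cons]

/-! ### power series lemmas -/
open PowerSeries

lemma coeff_one_sub_mul {R : Type} [CommRing R] (a : R) (f : PowerSeries R) (n : ℕ) :
    (coeff (n+1)) ((1 - C a * X) * f) = coeff (n+1) f - a * coeff n f := by
  rw [sub_mul, one_mul, map_sub, mul_assoc, coeff_C_mul, PowerSeries.coeff_succ_X_mul]

lemma coeff_zero_one_sub_mul {R : Type} [CommRing R] (a : R) (f : PowerSeries R) :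
    (coeff 0) ((1 - C a * X) * f) = coeff 0 f := by
  rw [sub_mul, one_mul, map_sub, mul_assoc, coeff_zero_eq_constantCoeff, map_mul]
  simp

lemma coeff_prod_quadratic {R : Type} [CommRing R] {α : Type} (s : Finset α) (b : α → R) :
    ∀ n, 2 * s.card < n → (coeff n) (∏ i ∈ s, (1 - C (b i) * X^2)) = 0 := by
  classical
  induction s using Finset.induction_on with
  | empty => intro n hn; simp at hn; rw [Finset.prod_empty, coeff_one, if_neg (by omega)]
  | @insert c s hc ih =>
    intro n hn
    rw [Finset.prod_insert hc, Finset.card_insert_of_notMem hc] at *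
    rw [sub_mul, one_mul, map_sub, mul_assoc, coeff_C_mul,
      PowerSeries.coeff_X_pow_mul' _ 2 n, if_pos (by omega), ih n (by omega),
      ih (n-2) (by omega)]
    simp

lemma coeff_prod_one_sub (s : Finset ℕ) (j : ℕ) :
    (coeff j) (∏ i ∈ s, (1 - C (av N i) * X)) =
      (-1)^j * esymA N s j := by
  classical
  induction s using Finset.induction_on generalizing j with
  | empty =>
    rw [Finset.prod_empty, coeff_one]
    rcases j with _ | j
    · simp
    · simp [esymA_eq_zero (by simp : (∅ : Finset ℕ).card < j+1)]
  | @insert c s hc ih =>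
    rw [Finset.prod_insert hc]
    rcases j with _ | j
    · rw [coeff_zero_one_sub_mul, ih 0]; simp
    · rw [coeff_one_sub_mul, ih (j+1), ih j, esymA_insert hc]
      ring

def Eser (N j : ℕ) : PowerSeries (QRing N) :=
  ∏ i ∈ Icc 2 j, (1 - C (av N i) * X)

def cc (N j t : ℕ) : QRing N := coeff t (genSeries N * Eser N j)

lemma cc_eq_sum (j t : ℕ) :
    cc N j t = ∑ i ∈ range (t+1), (-1)^i * esymA N (Icc 2 j) i * Qone N (t - i) := by
  rw [cc, mul_comm, PowerSeries.coeff_mul, Finset.Nat.sum_antidiagonal_eq_sum_range_succ_mk]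
  refine Finset.sum_congr rfl fun i _ => ?_
  show (coeff i) (Eser N j) * _ = _
  rw [Eser, coeff_prod_one_sub, Qone, mul_assoc]

@[simp] lemma constantCoeff_genSeries : constantCoeff (genSeries N) = 1 := by
  rw [genSeries, map_prod]
  refine Finset.prod_eq_one fun i _ => ?_
  rw [map_mul, map_add, map_one, map_mul, constantCoeff_C, constantCoeff_X, mul_zero, add_zero,
    constantCoeff_invOfUnit]
  simp

lemma card_Icc_two (m : ℕ) : (Icc 2 m).card = m - 1 := by
  rw [Nat.card_Icc]; omega

lemma Qfact_eq_cc (m : ℕ) : Qfact N m = cc N m m := by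
  rcases Nat.eq_zero_or_pos m with rfl | hm
  · rw [Qfact, if_pos rfl, cc_eq_sum]
    simp [Qone, PowerSeries.coeff_zero_eq_constantCoeff]
  · rw [Qfact, if_neg (by omega), cc_eq_sum, Finset.sum_range_succ,
      esymA_eq_zero (by rw [card_Icc_two]; omega)]
    simp

lemma Icc_two_succ (j : ℕ) (hj : 1 ≤ j) : Icc 2 (j+1) = insert (j+1) (Icc 2 j) := by
  ext x
  simp only [Finset.mem_Icc, Finset.mem_insert]
  omega

lemma Eser_succ (j : ℕ) (hj : 1 ≤ j) :
    Eser N (j+1) = (1 - C (av N (j+1)) * X) * Eser N j := by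
  rw [Eser, Eser, Icc_two_succ j hj, Finset.prod_insert (by simp)]

lemma cc_succ_succ (j t : ℕ) (hj : 1 ≤ j) :
    cc N (j+1) (t+1) = cc N j (t+1) - av N (j+1) * cc N j t := by
  rw [cc, Eser_succ j hj, mul_left_comm, coeff_one_sub_mul]
  rfl

lemma cc_succ_zero (j : ℕ) (hj : 1 ≤ j) : cc N (j+1) 0 = cc N j 0 := by
  rw [cc, Eser_succ j hj, mul_left_comm, coeff_zero_one_sub_mul]
  rfl

/-! ### helper Icc lemmas -/

lemma Eser_one : Eser N 1 = 1 := by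
  rw [Eser, Finset.Icc_eq_empty (by omega), Finset.prod_empty]

lemma Eser_zero : Eser N 0 = 1 := by
  rw [Eser, Finset.Icc_eq_empty (by omega), Finset.prod_empty]

lemma cc_one_eq (t : ℕ) : cc N 1 t = cc N 0 t := by
  rw [cc, cc, Eser_one, Eser_zero]

/-! ### INV1 -/

lemma inv1 : ∀ j t, t ≤ j →
    cc N j t = ∑ s ∈ range (t+1),
      (-1)^(t-s) * esymA N (Icc (s+2) j) (t-s) * cc N s s := by
  intro j
  induction j with
  | zero =>
    intro t ht
    interval_cases t
    simp
  | succ j ih =>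
    intro t ht
    rcases Nat.lt_or_ge t (j+1) with hlt | hge
    · -- t ≤ j
      have htj : t ≤ j := by omega
      rcases Nat.eq_zero_or_pos t with rfl | htpos
      · -- t = 0
        rcases Nat.eq_zero_or_pos j with rfl | hj
        · rw [cc_one_eq]; simp
        · rw [cc_succ_zero j hj, ih 0 (by omega)]
          simp
      · -- 1 ≤ t ≤ j, so j ≥ 1
        have hj : 1 ≤ j := le_trans htpos htj
        obtain ⟨t', rfl⟩ : ∃ t', t = t' + 1 := ⟨t - 1, by omega⟩
        rw [cc_succ_succ j t' hj, ih (t'+1) htj, ih t' (by omega)]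
        rw [Finset.sum_range_succ, Finset.sum_range_succ (n := t'+1)]
        simp only [Nat.sub_self, pow_zero, esymA_zero, one_mul, mul_one]
        rw [Finset.mul_sum, add_sub_right_comm, ← Finset.sum_sub_distrib]
        congr 1
        refine Finset.sum_congr rfl fun s hs => ?_
        have hs' : s < t' + 1 := Finset.mem_range.1 hs
        have he : Icc (s+2) (j+1) = insert (j+1) (Icc (s+2) j) := by
          ext x
          simp only [Finset.mem_Icc, Finset.mem_insert]
          omega
        have hnotin : (j+1) ∉ Icc (s+2) j := by simp
        have hsub : t' + 1 - s = (t' - s) + 1 := by omega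
        rw [he, hsub, esymA_insert hnotin, pow_succ]
        ring
    · -- t = j+1 : diagonal case
      have : t = j+1 := by omega
      subst this
      rw [Finset.sum_range_succ]
      simp only [Nat.sub_self, pow_zero, esymA_zero, one_mul]
      rw [Finset.sum_eq_zero, zero_add]
      intro s hs
      have hs' : s < j+1 := Finset.mem_range.1 hs
      have : esymA N (Icc (s+2) (j+1)) (j+1-s) = 0 := by
        apply esymA_eq_zero
        rw [Nat.card_Icc]
        omega
      rw [this]
      ring

/-! ### INV2 -/

lemma Icc_eq_insert_left {a b : ℕ} (h : a ≤ b) : Icc a b = insert a (Icc (a+1) b) := by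
  ext x
  simp only [Finset.mem_Icc, Finset.mem_insert]
  omega

lemma Icc_eq_insert_right {a b : ℕ} (h : a ≤ b) : Icc a b = insert b (Icc a (b-1)) := by
  ext x
  simp only [Finset.mem_Icc, Finset.mem_insert]
  omega

lemma hsymA_single (b n : ℕ) :
    hsymA N (Icc b b) (n+1) = av N b * hsymA N (Icc b b) n := by
  have h1 : Icc b b = insert b (∅ : Finset ℕ) := by
    ext x; simp [Finset.mem_Icc]
  rw [h1, hsymA_insert (Finset.notMem_empty b) n, hsymA_empty, zero_add]

lemma inv2 : ∀ d j t, 1 ≤ j → t = j + d →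
    cc N j t = ∑ r ∈ Icc j t, hsymA N (Icc (j+1) (r+1)) (t-r) * cc N r r := by
  intro d
  induction d with
  | zero =>
    intro j t hj ht
    subst ht
    rw [Nat.add_zero, Finset.Icc_self, Finset.sum_singleton, Nat.sub_self, hsymA_zero, one_mul]
  | succ d ih =>
    intro j t hj ht
    have hjt : j < t := by omega
    obtain ⟨t', rfl⟩ : ∃ t', t = t' + 1 := ⟨t - 1, by omega⟩
    have hrec : cc N j (t'+1) = cc N (j+1) (t'+1) + av N (j+1) * cc N j t' := by
      rw [cc_succ_succ j t' hj]; ring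
    rw [hrec, ih (j+1) (t'+1) (by omega) (by omega), ih j t' hj (by omega)]
    -- goal: sum over Icc (j+1) (t'+1) A_r + av*(sum over Icc j t' B_r) = sum over Icc j (t'+1) C_r
    rw [Icc_eq_insert_left (show j ≤ t' by omega),
        Icc_eq_insert_left (show j ≤ t'+1 by omega),
        Finset.sum_insert (by simp), Finset.sum_insert (by simp)]
    -- split off r = t'+1 from the two Icc (j+1) · sums
    rw [Icc_eq_insert_right (show j+1 ≤ t'+1 by omega), Finset.sum_insert (by simp),
        Finset.sum_insert (by simp)]
    simp only [Nat.add_sub_cancel, Nat.sub_self, hsymA_zero, one_mul]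
    have hS : hsymA N (Icc (j+1) (j+1)) (t'+1-j) =
        av N (j+1) * hsymA N (Icc (j+1) (j+1)) (t'-j) := by
      have h2 : t'+1-j = (t'-j)+1 := by omega
      rw [h2, hsymA_single]
    have hsum : ∑ x ∈ Icc (j+1) t', hsymA N (Icc (j+1) (x+1)) (t'+1-x) * cc N x x
        = ∑ x ∈ Icc (j+1) t', (hsymA N (Icc (j+1+1) (x+1)) (t'+1-x) * cc N x x
            + av N (j+1) * (hsymA N (Icc (j+1) (x+1)) (t'-x) * cc N x x)) := by
      refine Finset.sum_congr rfl fun x hx => ?_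
      have hx' := Finset.mem_Icc.1 hx
      have h1 : Icc (j+1) (x+1) = insert (j+1) (Icc (j+1+1) (x+1)) :=
        Icc_eq_insert_left (by omega)
      have h2 : t'+1-x = (t'-x)+1 := by omega
      rw [h2]
      conv_lhs => rw [h1]
      rw [hsymA_insert (by simp) (t'-x), ← h1]
      ring
    rw [hS, hsum, Finset.sum_add_distrib, mul_add, Finset.mul_sum]
    ring

/-! ### the classical relation: coefficient of the antisymmetric product -/

lemma rescale_one_sub {R : Type} [CommRing R] (x : R) :
    rescale (-1 : R) (1 - C x * X) = 1 + C x * X := by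
  rw [map_sub, map_one, map_mul, rescale_neg_one_X]
  have hC : rescale (-1 : R) (C x) = C x := by
    ext n
    rw [coeff_rescale]
    rcases n with _ | n <;> simp [PowerSeries.coeff_C]
  rw [hC]
  ring

lemma rescale_one_add {R : Type} [CommRing R] (x : R) :
    rescale (-1 : R) (1 + C x * X) = 1 - C x * X := by
  rw [map_add, map_one, map_mul, rescale_neg_one_X]
  have hC : rescale (-1 : R) (C x) = C x := by
    ext n
    rw [coeff_rescale]
    rcases n with _ | n <;> simp [PowerSeries.coeff_C]
  rw [hC]
  ring

lemma genSeries_mul_rescale :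
    genSeries N * (rescale (-1) (genSeries N)) = 1 := by
  rw [genSeries, map_prod, ← Finset.prod_mul_distrib]
  refine Finset.prod_eq_one fun i _ => ?_
  set x := xv N i
  set A : PowerSeries (QRing N) := 1 + C x * X
  set A' : PowerSeries (QRing N) := 1 - C x * X
  set B : PowerSeries (QRing N) := invOfUnit A' 1
  have hA'B : A' * B = 1 := PowerSeries.mul_invOfUnit A' 1 (by simp [A'])
  have h1 : rescale (-1 : QRing N) (A * B) = A' * rescale (-1) B := by
    rw [map_mul, rescale_one_add]
  rw [h1]
  calc A * B * (A' * rescale (-1) B) = (A' * B) * (A * rescale (-1) B) := by ring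
    _ = A * rescale (-1) B := by rw [hA'B, one_mul]
    _ = rescale (-1) (A' * B) := by rw [map_mul, rescale_one_sub]
    _ = 1 := by rw [hA'B, map_one]

lemma classical_vanish (k : ℕ) (hk : 1 ≤ k) :
    ∑ m ∈ range (2*k+1), (-1 : QRing N)^m * cc N k m * cc N k (2*k - m) = 0 := by
  have hmain : (genSeries N * Eser N k) * rescale (-1) (genSeries N * Eser N k) =
      ∏ i ∈ Icc 2 k, (1 - C (av N i * av N i) * X^2) := by
    rw [map_mul]
    calc (genSeries N * Eser N k) * (rescale (-1) (genSeries N) * rescale (-1) (Eser N k))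
        = (genSeries N * rescale (-1) (genSeries N)) * (Eser N k * rescale (-1) (Eser N k)) := by
          ring
      _ = Eser N k * rescale (-1) (Eser N k) := by rw [genSeries_mul_rescale, one_mul]
      _ = ∏ i ∈ Icc 2 k, ((1 - C (av N i) * X) * (1 + C (av N i) * X)) := by
          rw [Eser, map_prod, ← Finset.prod_mul_distrib]
          exact Finset.prod_congr rfl fun i _ => by rw [rescale_one_sub]
      _ = ∏ i ∈ Icc 2 k, (1 - C (av N i * av N i) * X^2) := by
          refine Finset.prod_congr rfl fun i _ => ?_
          rw [map_mul]
          ring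
  have hco : (coeff (2*k)) ((genSeries N * Eser N k) *
      rescale (-1) (genSeries N * Eser N k)) = 0 := by
    rw [hmain]
    apply coeff_prod_quadratic
    rw [card_Icc_two]
    omega
  rw [PowerSeries.coeff_mul, Finset.Nat.sum_antidiagonal_eq_sum_range_succ_mk] at hco
  rw [← hco]
  refine Finset.sum_congr rfl fun m hm => ?_
  have hm' : m ≤ 2*k := by have := Finset.mem_range.1 hm; omega
  show (-1 : QRing N)^m * cc N k m * cc N k (2*k - m) =
    cc N k m * (coeff (2*k - m)) (rescale (-1) (genSeries N * Eser N k))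
  rw [coeff_rescale]
  have hsign : (-1 : QRing N)^(2*k - m) = (-1)^m := by
    have h1 : (-1 : QRing N)^(2*k - m) * ((-1)^m * (-1)^m) = (-1)^(2*k-m) := by
      rw [← pow_add]
      have : m + m = 2*m := by omega
      rw [this, pow_mul]
      simp
    have h2 : (-1 : QRing N)^(2*k - m) * (-1)^m = 1 := by
      rw [← pow_add]
      have : 2*k - m + m = 2*k := by omega
      rw [this, pow_mul]
      simp
    calc (-1 : QRing N)^(2*k-m) = (-1 : QRing N)^(2*k - m) * ((-1)^m * (-1)^m) := h1.symm
      _ = ((-1 : QRing N)^(2*k - m) * (-1)^m) * (-1)^m := by ring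
      _ = (-1)^m := by rw [h2, one_mul]
  rw [hsign]
  show _ = cc N k m * ((-1)^m * cc N k (2*k - m))
  ring

/-! ### assembly -/

lemma neg_one_pow_parity {R : Type} [CommRing R] (a b : ℕ) (h : (a + b) % 2 = 0) :
    (-1 : R)^a = (-1 : R)^b := by
  have h1 : (-1 : R)^(a+b) = 1 := by
    obtain ⟨c, hc⟩ : ∃ c, a + b = 2*c := ⟨(a+b)/2, by omega⟩
    rw [hc, pow_mul]; simp
  have h2 : (-1 : R)^b * (-1 : R)^b = 1 := by
    rw [← pow_add]
    obtain ⟨c, hc⟩ : ∃ c, b + b = 2*c := ⟨b, by omega⟩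
    rw [hc, pow_mul]; simp
  calc (-1 : R)^a = (-1 : R)^a * ((-1 : R)^b * (-1 : R)^b) := by rw [h2, mul_one]
    _ = (-1 : R)^(a+b) * (-1 : R)^b := by rw [← pow_add]; ring
    _ = (-1 : R)^b := by rw [h1, one_mul]

lemma S_split (k : ℕ) (hk : 1 ≤ k) :
    ∑ m ∈ range (2*k+1), (-1 : QRing N)^m * cc N k m * cc N k (2*k - m)
    = (-1 : QRing N)^k * (cc N k k * cc N k k)
      + ∑ m ∈ Icc (k+1) (2*k), 2 * ((-1 : QRing N)^m * cc N k m * cc N k (2*k - m)) := by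
  have hsplit : range (2*k+1) = range k ∪ Icc k (2*k) := by
    ext x; simp only [Finset.mem_range, Finset.mem_union, Finset.mem_Icc]; omega
  have hdisj : Disjoint (range k) (Icc k (2*k)) := by
    rw [Finset.disjoint_left]
    intro x hx hx'
    simp only [Finset.mem_range] at hx
    simp only [Finset.mem_Icc] at hx'
    omega
  rw [hsplit, Finset.sum_union hdisj, Icc_eq_insert_left (by omega : k ≤ 2*k),
    Finset.sum_insert (by simp)]
  have hrefl : ∑ m ∈ range k, (-1 : QRing N)^m * cc N k m * cc N k (2*k - m)
      = ∑ m ∈ Icc (k+1) (2*k), (-1 : QRing N)^m * cc N k (2*k - m) * cc N k m := by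
    refine Finset.sum_nbij' (fun m => 2*k - m) (fun m => 2*k - m) ?_ ?_ ?_ ?_ ?_
    · intro m hm
      simp only [Finset.mem_range] at hm
      simp only [Finset.mem_Icc]
      omega
    · intro m hm
      simp only [Finset.mem_Icc] at hm
      simp only [Finset.mem_range]
      omega
    · intro m hm
      simp only [Finset.mem_range] at hm
      show 2*k - (2*k - m) = m
      omega
    · intro m hm
      simp only [Finset.mem_Icc] at hm
      show 2*k - (2*k - m) = m
      omega
    · intro m hm
      simp only [Finset.mem_range] at hm
      have h1 : 2*k - (2*k - m) = m := by omega
      rw [h1, neg_one_pow_parity (R := QRing N) (2*k - m) m (by omega)]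
  rw [hrefl]
  have h2k : 2*k - k = k := by omega
  rw [h2k, add_left_comm, ← Finset.sum_add_distrib]
  congr 1
  · ring
  · refine Finset.sum_congr rfl fun m hm => ?_
    ring

/-! ### triple sums -/

def psiT (N k m r s : ℕ) : QRing N :=
  2 * (-1)^(k-s) * hsymA N (Icc (k+1) (r+1)) (m-r) * esymA N (Icc (s+2) k) (2*k-m-s)
    * cc N r r * cc N s s

def phiT (N k r s j : ℕ) : QRing N :=
  2 * (-1)^(k-s) * hsymA N (Icc (k+1) (r+1)) (k+k-r-s-j) * esymA N (Icc (s+2) k) j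
    * cc N r r * cc N s s

lemma ite_sum {α β : Type} [AddCommMonoid β] (P : Prop) [Decidable P]
    (s : Finset α) (Q : α → Prop) [DecidablePred Q] (f : α → β) :
    (if P then (∑ x ∈ s, if Q x then f x else 0) else 0)
      = ∑ x ∈ s, if P ∧ Q x then f x else 0 := by
  by_cases hP : P
  · rw [if_pos hP]
    refine Finset.sum_congr rfl fun x _ => ?_
    by_cases hq : Q x
    · rw [if_pos hq, if_pos ⟨hP, hq⟩]
    · rw [if_neg hq, if_neg (fun h => hq h.2)]
  · rw [if_neg hP, Finset.sum_eq_zero]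
    intro x _
    rw [if_neg (fun h => hP h.1)]

lemma box1 (k : ℕ) (hk : 1 ≤ k) :
    ∑ m ∈ Icc k (2*k), ∑ r ∈ Icc k m, ∑ s ∈ range (2*k-m+1), psiT N k m r s
    = ∑ r ∈ Icc k (2*k), ∑ s ∈ range (k+1), ∑ m ∈ Icc k (2*k),
        (if r ≤ m ∧ m + s ≤ 2*k then psiT N k m r s else 0) := by
  have step : ∀ m ∈ Icc k (2*k),
      ∑ r ∈ Icc k m, ∑ s ∈ range (2*k-m+1), psiT N k m r s
      = ∑ r ∈ Icc k (2*k), ∑ s ∈ range (k+1),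
          (if r ≤ m ∧ m + s ≤ 2*k then psiT N k m r s else 0) := by
    intro m hm
    simp only [Finset.mem_Icc] at hm
    have h2 : ∀ r : ℕ, ∑ s ∈ range (2*k-m+1), psiT N k m r s
        = ∑ s ∈ range (k+1), (if m + s ≤ 2*k then psiT N k m r s else 0) := by
      intro r
      have hf : range (2*k-m+1) = (range (k+1)).filter (fun s => m + s ≤ 2*k) := by
        ext x
        simp only [Finset.mem_range, Finset.mem_filter]
        omega
      rw [hf, Finset.sum_filter]
    have h1 : Icc k m = (Icc k (2*k)).filter (fun r => r ≤ m) := by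
      ext x
      simp only [Finset.mem_Icc, Finset.mem_filter]
      omega
    calc ∑ r ∈ Icc k m, ∑ s ∈ range (2*k-m+1), psiT N k m r s
        = ∑ r ∈ Icc k m, ∑ s ∈ range (k+1), (if m + s ≤ 2*k then psiT N k m r s else 0) :=
          Finset.sum_congr rfl fun r _ => h2 r
      _ = ∑ r ∈ Icc k (2*k), (if r ≤ m then
            ∑ s ∈ range (k+1), (if m + s ≤ 2*k then psiT N k m r s else 0) else 0) := by
          rw [h1, Finset.sum_filter]
      _ = ∑ r ∈ Icc k (2*k), ∑ s ∈ range (k+1),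
            (if r ≤ m ∧ m + s ≤ 2*k then psiT N k m r s else 0) :=
          Finset.sum_congr rfl fun r _ => ite_sum _ _ _ _
  rw [Finset.sum_congr rfl step, Finset.sum_comm]
  refine Finset.sum_congr rfl fun r hr => Finset.sum_comm

lemma box2 (k : ℕ) (hk : 1 ≤ k) :
    ∑ r ∈ Icc k (2*k), ∑ s ∈ range (k+1), ∑ m ∈ Icc k (2*k),
        (if r ≤ m ∧ m + s ≤ 2*k then psiT N k m r s else 0)
    = ∑ r ∈ Icc k (2*k), ∑ s ∈ range (2*k-r+1), ∑ j ∈ range (k+k-r-s+1), phiT N k r s j := by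
  refine Finset.sum_congr rfl fun r hr => ?_
  simp only [Finset.mem_Icc] at hr
  have hsub : range (2*k-r+1) ⊆ range (k+1) := by
    intro x hx
    simp only [Finset.mem_range] at hx ⊢
    omega
  rw [← Finset.sum_subset hsub]
  · refine Finset.sum_congr rfl fun s hs => ?_
    simp only [Finset.mem_range] at hs
    have hfil : (Icc k (2*k)).filter (fun m => r ≤ m ∧ m + s ≤ 2*k) = Icc r (2*k-s) := by
      ext x
      simp only [Finset.mem_Icc, Finset.mem_filter]
      omega
    rw [← Finset.sum_filter, hfil]
    refine Finset.sum_nbij' (fun m => 2*k-s-m) (fun j => 2*k-s-j) ?_ ?_ ?_ ?_ ?_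
    · intro m hm
      simp only [Finset.mem_Icc] at hm
      simp only [Finset.mem_range]
      omega
    · intro j hj
      simp only [Finset.mem_range] at hj
      simp only [Finset.mem_Icc]
      omega
    · intro m hm
      simp only [Finset.mem_Icc] at hm
      show 2*k - s - (2*k - s - m) = m
      omega
    · intro j hj
      simp only [Finset.mem_range] at hj
      show 2*k - s - (2*k - s - j) = j
      omega
    · intro m hm
      simp only [Finset.mem_Icc] at hm
      show psiT N k m r s = phiT N k r s (2*k - s - m)
      rw [psiT, phiT]
      have e1 : k + k - r - s - (2*k - s - m) = m - r := by omega
      have e2 : 2*k - s - m = 2*k - m - s := by omega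
      rw [e1, e2]
  · intro s hs hs'
    simp only [Finset.mem_range] at hs hs'
    refine Finset.sum_eq_zero fun m hm => ?_
    simp only [Finset.mem_Icc] at hm
    rw [if_neg]
    omega

lemma slice_k (k : ℕ) (hk : 1 ≤ k) :
    ∑ r ∈ Icc k k, ∑ s ∈ range (k+1), psiT N k k r s = 2 * (cc N k k * cc N k k) := by
  rw [Finset.Icc_self, Finset.sum_singleton, Finset.sum_range_succ, Finset.sum_eq_zero, zero_add]
  · rw [psiT]
    have e1 : k - k = 0 := by omega
    have e2 : 2*k - k - k = 0 := by omega
    rw [e1, e2, hsymA_zero, esymA_zero]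
    ring
  · intro s hs
    simp only [Finset.mem_range] at hs
    rw [psiT]
    have e2 : 2*k - k - s = k - s := by omega
    rw [e2, esymA_eq_zero (by rw [Nat.card_Icc]; omega)]
    ring

lemma T2_split (k : ℕ) (hk : 1 ≤ k) :
    ∑ r ∈ Icc k (2*k), ∑ s ∈ range (2*k-r+1), ∑ j ∈ range (k+k-r-s+1), phiT N k r s j
    = 2 * (cc N k k * cc N k k)
      + 2 * ∑ i ∈ Icc 1 k, (-1 : QRing N)^i * cc N (k+i) (k+i) * cc N (k-i) (k-i)
      + ∑ r ∈ Icc k (2*k-1), ∑ s ∈ range (2*k-1-r+1), fco N k k r s * cc N r r * cc N s s := by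
  have hsplit : ∀ r ∈ Icc k (2*k),
      ∑ s ∈ range (2*k-r+1), ∑ j ∈ range (k+k-r-s+1), phiT N k r s j
      = (∑ s ∈ range (2*k-r), ∑ j ∈ range (k+k-r-s+1), phiT N k r s j)
        + 2 * (-1 : QRing N)^(r-k) * cc N r r * cc N (2*k-r) (2*k-r) := by
    intro r hr
    simp only [Finset.mem_Icc] at hr
    rw [Finset.sum_range_succ]
    congr 1
    have e0 : k + k - r - (2*k-r) = 0 := by omega
    rw [e0, Finset.sum_range_one, phiT, e0, hsymA_zero, esymA_zero]
    have e1 : k - (2*k - r) = r - k := by omega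
    rw [e1]
    ring
  rw [Finset.sum_congr rfl hsplit, Finset.sum_add_distrib]
  have hB : ∑ r ∈ Icc k (2*k), 2 * (-1 : QRing N)^(r-k) * cc N r r * cc N (2*k-r) (2*k-r)
      = 2 * (cc N k k * cc N k k)
        + 2 * ∑ i ∈ Icc 1 k, (-1 : QRing N)^i * cc N (k+i) (k+i) * cc N (k-i) (k-i) := by
    rw [Icc_eq_insert_left (by omega : k ≤ 2*k), Finset.sum_insert (by simp)]
    congr 1
    · have e1 : k - k = 0 := by omega
      have e2 : 2*k - k = k := by omega
      rw [e1, e2]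
      ring
    · rw [Finset.mul_sum]
      refine Finset.sum_nbij' (fun r => r - k) (fun i => k + i) ?_ ?_ ?_ ?_ ?_
      · intro r hr
        simp only [Finset.mem_Icc] at hr ⊢
        omega
      · intro i hi
        simp only [Finset.mem_Icc] at hi ⊢
        omega
      · intro r hr
        simp only [Finset.mem_Icc] at hr
        show k + (r - k) = r
        omega
      · intro i hi
        simp only [Finset.mem_Icc] at hi
        show k + i - k = i
        omega
      · intro r hr
        simp only [Finset.mem_Icc] at hr
        have e1 : k + (r - k) = r := by omega
        have e2 : k - (r - k) = 2*k - r := by omega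
        rw [e1, e2]
        ring
  have hC : ∑ r ∈ Icc k (2*k), ∑ s ∈ range (2*k-r), ∑ j ∈ range (k+k-r-s+1), phiT N k r s j
      = ∑ r ∈ Icc k (2*k-1), ∑ s ∈ range (2*k-1-r+1), fco N k k r s * cc N r r * cc N s s := by
    rw [Icc_eq_insert_right (by omega : k ≤ 2*k), Finset.sum_insert (by
      simp only [Finset.mem_Icc]; omega)]
    have e0 : 2*k - 2*k = 0 := by omega
    rw [e0, Finset.range_zero, Finset.sum_empty, zero_add]
    refine Finset.sum_congr rfl fun r hr => ?_
    simp only [Finset.mem_Icc] at hr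
    have er : 2*k - r = 2*k - 1 - r + 1 := by omega
    rw [er]
    refine Finset.sum_congr rfl fun s hs => ?_
    simp only [Finset.mem_range] at hs
    rw [fco, Finset.mul_sum, Finset.sum_mul, Finset.sum_mul]
    refine Finset.sum_congr rfl fun j hj => ?_
    rw [phiT]
    ring
  rw [hB, hC]
  ring

lemma step2 (k : ℕ) (hk : 1 ≤ k) (m : ℕ) (hm1 : k+1 ≤ m) (hm2 : m ≤ 2*k) :
    (-1 : QRing N)^k * (2 * ((-1 : QRing N)^m * cc N k m * cc N k (2*k - m)))
    = ∑ r ∈ Icc k m, ∑ s ∈ range (2*k-m+1), psiT N k m r s := by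
  rw [inv2 (m-k) k m hk (by omega), inv1 k (2*k-m) (by omega)]
  simp only [Finset.mul_sum, Finset.sum_mul]
  rw [Finset.sum_comm]
  refine Finset.sum_congr rfl fun r hr => ?_
  refine Finset.sum_congr rfl fun s hs => ?_
  simp only [Finset.mem_Icc] at hr
  simp only [Finset.mem_range] at hs
  rw [psiT]
  have hsgn : (-1 : QRing N)^k * ((-1 : QRing N)^m * (-1 : QRing N)^(2*k-m-s))
      = (-1 : QRing N)^(k-s) := by
    rw [← pow_add, ← pow_add]
    exact neg_one_pow_parity _ _ (by omega)
  linear_combination (2 * hsymA N (Icc (k+1) (r+1)) (m-r) * esymA N (Icc (s+2) k) (2*k-m-s)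
    * cc N r r * cc N s s) * hsgn


/-- For every `N ≥ 1` and `k ≥ 1`:
`Q_k(x|a)² + 2 Σ_{i=1}^{k} (−1)^i Q_{k+i}(x|a) Q_{k−i}(x|a)
 + Σ_{r=k}^{2k−1} Σ_{s=0}^{2k−1−r} f_{k,k}^{r,s}(a) Q_r(x|a) Q_s(x|a) = 0`. -/
theorem Qfact_sq_relation (N : ℕ) (hN : 1 ≤ N) (k : ℕ) (hk : 1 ≤ k) :
    Qfact N k ^ 2 +
      2 * ∑ i ∈ Icc 1 k, (-1) ^ i * Qfact N (k + i) * Qfact N (k - i) +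
      ∑ r ∈ Icc k (2 * k - 1), ∑ s ∈ range (2 * k - 1 - r + 1),
        fco N k k r s * Qfact N r * Qfact N s = 0 := by
  simp only [Qfact_eq_cc]
  have hS := classical_vanish (N := N) k hk
  have hSsplit := S_split (N := N) k hk
  have hkk : (-1 : QRing N)^k * (-1 : QRing N)^k = 1 := by
    rw [← pow_add]
    obtain ⟨c, hc⟩ : ∃ c, k + k = 2*c := ⟨k, by omega⟩
    rw [hc, pow_mul]; simp
  have h0 : cc N k k * cc N k k
      + ∑ m ∈ Icc (k+1) (2*k),
          (-1 : QRing N)^k * (2 * ((-1 : QRing N)^m * cc N k m * cc N k (2*k - m))) = 0 := by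
    have expand : (-1 : QRing N)^k * ((-1 : QRing N)^k * (cc N k k * cc N k k)
        + ∑ m ∈ Icc (k+1) (2*k), 2 * ((-1 : QRing N)^m * cc N k m * cc N k (2*k - m)))
        = cc N k k * cc N k k
          + ∑ m ∈ Icc (k+1) (2*k),
              (-1 : QRing N)^k * (2 * ((-1 : QRing N)^m * cc N k m * cc N k (2*k - m))) := by
      rw [mul_add, Finset.mul_sum, ← mul_assoc, hkk, one_mul]
    rw [← expand, ← hSsplit, hS, mul_zero]
  have hM1 : ∑ m ∈ Icc (k+1) (2*k),
      (-1 : QRing N)^k * (2 * ((-1 : QRing N)^m * cc N k m * cc N k (2*k - m)))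
      = ∑ m ∈ Icc (k+1) (2*k), ∑ r ∈ Icc k m, ∑ s ∈ range (2*k-m+1), psiT N k m r s := by
    refine Finset.sum_congr rfl fun m hm => ?_
    simp only [Finset.mem_Icc] at hm
    exact step2 k hk m hm.1 hm.2
  have h1 : ∑ m ∈ Icc k (2*k), ∑ r ∈ Icc k m, ∑ s ∈ range (2*k-m+1), psiT N k m r s
      = 2 * (cc N k k * cc N k k)
        + ∑ m ∈ Icc (k+1) (2*k), ∑ r ∈ Icc k m, ∑ s ∈ range (2*k-m+1), psiT N k m r s := by
    rw [Icc_eq_insert_left (by omega : k ≤ 2*k), Finset.sum_insert (by simp)]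
    congr 1
    have e1 : 2*k - k = k := by omega
    rw [e1]
    exact slice_k k hk
  have h2 : ∑ m ∈ Icc k (2*k), ∑ r ∈ Icc k m, ∑ s ∈ range (2*k-m+1), psiT N k m r s
      = 2 * (cc N k k * cc N k k)
        + 2 * ∑ i ∈ Icc 1 k, (-1 : QRing N)^i * cc N (k+i) (k+i) * cc N (k-i) (k-i)
        + ∑ r ∈ Icc k (2*k-1), ∑ s ∈ range (2*k-1-r+1), fco N k k r s * cc N r r * cc N s s :=
    (box1 k hk).trans ((box2 k hk).trans (T2_split k hk))
  linear_combination h0 - hM1 + h1 - h2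


end
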